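/- Let T : ℂ_{(1,…,1)}[z₁,…,zₙ] → ℂ[z₁,…,zₙ] be a linear operator on the space of multi-affine polynomials in n variables such that the polynomial G_T(z,w) = T[Π_{i=1}^n (zᵢ+wᵢ)] = Σ_{S ⊆ [n]} T(z^S)·w^{[n]∖S} in 2n variables is stable. Then T preserves stability: for every stable multi-affine f ∈ ℂ_{(1,…,1)}[z₁,…,zₙ], T(f) is stable or identically zero. -/

import Mathlib

open MvPolynomial

/-- A complex polynomial is *stable* if it is non-vanishing whenever all
variables lie in the open upper half-plane. -/
def IsStable {σ : Type*} (f : MvPolynomial σ ℂ) : Prop :=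
  ∀ z : σ → ℂ, (∀ i, 0 < (z i).im) → MvPolynomial.eval z f ≠ 0

section BBAux

open Polynomial Complex in
private theorem bb_dummy : True := trivial

section BBAnalytic
open Polynomial Complex

-- Quadratic lemma: roots of a UHP-nonvanishing quadratic give Im(B/C) ≥ 0
lemma quad_im_div_nonneg (A B C : ℂ) (hC : C ≠ 0)
    (h : ∀ s : ℂ, 0 < s.im → A + B * s + C * s ^ 2 ≠ 0) : 0 ≤ (B / C).im := by
  obtain ⟨w, hw⟩ := IsAlgClosed.exists_pow_nat_eq (k := ℂ) (B ^ 2 - 4 * A * C) (n := 2)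
    (by norm_num)
  set r₁ : ℂ := (-B + w) / (2 * C) with hr₁
  set r₂ : ℂ := (-B - w) / (2 * C) with hr₂
  have key : ∀ s : ℂ, A + B * s + C * s ^ 2 = C * (s - r₁) * (s - r₂) := by
    intro s
    rw [hr₁, hr₂]
    field_simp
    ring_nf
    linear_combination hw
  have him1 : r₁.im ≤ 0 := by
    by_contra hpos
    exact h r₁ (by linarith) (by rw [key]; ring)
  have him2 : r₂.im ≤ 0 := by
    by_contra hpos
    exact h r₂ (by linarith) (by rw [key]; ring)
  have hsum : B / C = -(r₁ + r₂) := by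
    rw [hr₁, hr₂]; field_simp; ring
  rw [hsum]
  simp only [Complex.neg_im, Complex.add_im]
  linarith

-- reversal
lemma quad_reverse (A B C : ℂ)
    (h : ∀ s : ℂ, 0 < s.im → A + B * s + C * s ^ 2 ≠ 0) :
    ∀ s : ℂ, 0 < s.im → C - B * s + A * s ^ 2 ≠ 0 := by
  intro s hs
  have hs0 : s ≠ 0 := by
    intro h0; rw [h0] at hs; simp at hs
  have him : 0 < (-s⁻¹).im := by
    rw [Complex.neg_im, Complex.inv_im, neg_div, neg_neg]
    have : 0 < Complex.normSq s := Complex.normSq_pos.2 hs0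
    positivity
  have hne := h (-s⁻¹) him
  have : C - B * s + A * s ^ 2 = s ^ 2 * (A + B * (-s⁻¹) + C * (-s⁻¹) ^ 2) := by
    field_simp
    ring
  rw [this]
  exact mul_ne_zero (pow_ne_zero _ hs0) hne

lemma eval_aeval_line {σ : Type*} (x₀ x₁ : σ → ℂ) (q : MvPolynomial σ ℂ) (t : ℂ) :
    (MvPolynomial.aeval
        (fun i => Polynomial.C (x₀ i) + Polynomial.X * Polynomial.C (x₁ i - x₀ i)) q).eval t
      = MvPolynomial.eval (fun i => x₀ i + t * (x₁ i - x₀ i)) q := by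
  induction q using MvPolynomial.induction_on with
  | C a => simp
  | add p q hp hq => simp only [map_add, Polynomial.eval_add, hp, hq]
  | mul_X p i hp =>
      simp only [map_mul, MvPolynomial.aeval_X, Polynomial.eval_mul, hp, MvPolynomial.eval_mul,
        MvPolynomial.eval_X, Polynomial.eval_add, Polynomial.eval_C, Polynomial.eval_X]

lemma line_vanish {σ : Type*} [Fintype σ] (b d : MvPolynomial σ ℂ) (x₀ x₁ : σ → ℂ)
    (hx₀ : ∀ i, 0 < (x₀ i).im)
    (hb0 : MvPolynomial.eval x₀ b = 0) (hd0 : MvPolynomial.eval x₀ d ≠ 0)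
    (hb1 : MvPolynomial.eval x₁ b ≠ 0)
    (hIm : ∀ x : σ → ℂ, (∀ i, 0 < (x i).im) → MvPolynomial.eval x d ≠ 0 →
      ((MvPolynomial.eval x b) / (MvPolynomial.eval x d)).im ≤ 0) : False := by
  set Bp : Polynomial ℂ := MvPolynomial.aeval
    (fun i => Polynomial.C (x₀ i) + Polynomial.X * Polynomial.C (x₁ i - x₀ i)) b with hBp
  set Dp : Polynomial ℂ := MvPolynomial.aeval
    (fun i => Polynomial.C (x₀ i) + Polynomial.X * Polynomial.C (x₁ i - x₀ i)) d with hDp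
  have hBeval : ∀ t : ℂ, Bp.eval t = MvPolynomial.eval (fun i => x₀ i + t * (x₁ i - x₀ i)) b :=
    fun t => eval_aeval_line x₀ x₁ b t
  have hDeval : ∀ t : ℂ, Dp.eval t = MvPolynomial.eval (fun i => x₀ i + t * (x₁ i - x₀ i)) d :=
    fun t => eval_aeval_line x₀ x₁ d t
  have hline0 : (fun i => x₀ i + (0:ℂ) * (x₁ i - x₀ i)) = x₀ := by funext i; ring
  have hline1 : (fun i => x₀ i + (1:ℂ) * (x₁ i - x₀ i)) = x₁ := by funext i; ring
  have hB0 : Bp.eval 0 = 0 := by rw [hBeval, hline0]; exact hb0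
  have hD0 : Dp.eval 0 ≠ 0 := by rw [hDeval, hline0]; exact hd0
  have hB1 : Bp.eval 1 ≠ 0 := by rw [hBeval, hline1]; exact hb1
  -- a ball around 0 where the line stays in the upper half plane and Dp ≠ 0
  have hev : ∀ᶠ t in nhds (0:ℂ),
      (∀ i, 0 < (x₀ i + t * (x₁ i - x₀ i)).im) ∧ Polynomial.eval t Dp ≠ 0 := by
    have h1 : ∀ i, ∀ᶠ t in nhds (0:ℂ), 0 < (x₀ i + t * (x₁ i - x₀ i)).im := by
      intro i
      have hc : Continuous fun t : ℂ => (x₀ i + t * (x₁ i - x₀ i)).im := by continuity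
      have : (0:ℂ) ∈ {t : ℂ | 0 < (x₀ i + t * (x₁ i - x₀ i)).im} := by
        simp only [Set.mem_setOf_eq, zero_mul, add_zero]
        exact hx₀ i
      exact (isOpen_lt continuous_const hc).mem_nhds this
    have h2 : ∀ᶠ t in nhds (0:ℂ), Polynomial.eval t Dp ≠ 0 := by
      have : IsOpen {t : ℂ | Polynomial.eval t Dp ≠ 0} :=
        isOpen_compl_iff.2 (isClosed_eq (Polynomial.continuous Dp) continuous_const)
      exact this.mem_nhds hD0
    exact (Filter.eventually_all.2 h1).and h2
  obtain ⟨δ, hδpos, hδ⟩ := Metric.eventually_nhds_iff.1 hev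
  set U : Set ℂ := Metric.ball (0:ℂ) δ with hU
  have hUmem : ∀ t ∈ U, (∀ i, 0 < (x₀ i + t * (x₁ i - x₀ i)).im) ∧ Polynomial.eval t Dp ≠ 0 := by
    intro t ht; exact hδ (by simpa [hU, Metric.mem_ball] using ht)
  set h : ℂ → ℂ := fun t => Polynomial.eval t Bp / Polynomial.eval t Dp with hhdef
  have hdiff : DifferentiableOn ℂ h U := by
    apply DifferentiableOn.div (Polynomial.differentiable Bp).differentiableOn
      (Polynomial.differentiable Dp).differentiableOn
    intro t ht; exact (hUmem t ht).2
  have hImh : ∀ t ∈ U, (h t).im ≤ 0 := by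
    intro t ht
    rw [hhdef]
    simp only [hBeval, hDeval]
    exact hIm _ (hUmem t ht).1 (by rw [← hDeval]; exact (hUmem t ht).2)
  have hzero : h 0 = 0 := by rw [hhdef]; simp [hB0]
  -- maximum modulus for exp(-I h)
  set g : ℂ → ℂ := fun t => Complex.exp (-Complex.I * h t) with hg
  have hgdiff : DifferentiableOn ℂ g U := ((hdiff.const_mul (-Complex.I)).cexp)
  have hgnorm : ∀ t, ‖g t‖ = Real.exp ((h t).im) := by
    intro t
    rw [hg]
    simp only [Complex.norm_exp]
    congr 1
    simp [Complex.mul_re]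
  have hg0 : g 0 = 1 := by simp [hg, hzero]
  have hmax : IsMaxOn (norm ∘ g) U 0 := by
    intro t ht
    simp only [Function.comp_apply, hgnorm, hzero, Set.mem_setOf_eq]
    simpa using Real.exp_le_exp.2 (hImh t ht)
  have h0U : (0:ℂ) ∈ U := Metric.mem_ball_self hδpos
  have heq := Complex.eqOn_of_isPreconnected_of_isMaxOn_norm
    (convex_ball (0:ℂ) δ).isPreconnected Metric.isOpen_ball hgdiff h0U hmax
  -- on U, h takes values in 2πℤ
  have hreal : ∀ t ∈ U, ∃ m : ℤ, h t = -(2 * Real.pi * m) := by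
    intro t ht
    have : g t = 1 := by rw [heq ht, hg0]; rfl
    rw [hg] at this
    obtain ⟨m, hm⟩ := Complex.exp_eq_one_iff.1 this
    refine ⟨m, ?_⟩
    have h2 : (-Complex.I) * h t = (-Complex.I) * (-(2 * Real.pi * m)) := by
      rw [hm]; push_cast; ring
    exact mul_left_cancel₀ (neg_ne_zero.2 Complex.I_ne_zero) h2
  -- by continuity, h = 0 near 0
  have hcont : ContinuousAt h 0 :=
    (hdiff.continuousOn).continuousAt (Metric.isOpen_ball.mem_nhds h0U)
  have hsmall : ∀ᶠ t in nhds (0:ℂ), ‖h t‖ < 1 := by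
    have := hcont.tendsto
    rw [hzero] at this
    have hball := this (Metric.ball_mem_nhds (0:ℂ) one_pos)
    filter_upwards [hball] with t ht
    simpa [Metric.mem_ball] using ht
  have hU' : ∀ᶠ t in nhds (0:ℂ), t ∈ U := Metric.isOpen_ball.mem_nhds h0U
  have hhzero : ∀ᶠ t in nhds (0:ℂ), h t = 0 := by
    filter_upwards [hsmall, hU'] with t h1 h2
    obtain ⟨m, hm⟩ := hreal t h2
    rcases eq_or_ne m 0 with rfl | hm0
    · simpa using hm
    · exfalso
      rw [hm] at h1
      have : ‖(-(2 * Real.pi * m) : ℂ)‖ = 2 * Real.pi * |(m:ℝ)| := by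
        have : ((-(2 * Real.pi * m)) : ℂ) = (((-(2 * Real.pi * m)) : ℝ) : ℂ) := by push_cast; ring
        rw [this, Complex.norm_real, Real.norm_eq_abs]
        rw [abs_neg, abs_mul, abs_of_pos (by positivity : (0:ℝ) < 2 * Real.pi)]
      rw [this] at h1
      have hm1 : (1:ℝ) ≤ |(m:ℝ)| := by
        rw [← Int.cast_abs]
        exact_mod_cast Int.one_le_abs hm0
      nlinarith [Real.pi_gt_three]
  -- hence Bp vanishes near 0, so Bp = 0, contradicting hB1
  obtain ⟨δ', hδ'pos, hδ'⟩ := Metric.eventually_nhds_iff.1 (hhzero.and hU')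
  have hroots : {x : ℂ | Polynomial.IsRoot Bp x}.Infinite := by
    have hinf : (Complex.ofReal '' Set.Ioo 0 (min δ' 1)).Infinite :=
      Set.Infinite.image (Complex.ofReal_injective.injOn)
        (Set.Ioo_infinite (by positivity))
    apply hinf.mono
    rintro x ⟨r, hr, rfl⟩
    have hrU : dist (r:ℂ) (0:ℂ) < δ' := by
      simp only [dist_zero_right, Complex.norm_real, Real.norm_eq_abs]
      rw [abs_of_pos hr.1]
      exact lt_of_lt_of_le hr.2 (min_le_left _ _)
    have hmem := hδ' hrU
    have hh0 : h r = 0 := hmem.1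
    have hD : Polynomial.eval (r:ℂ) Dp ≠ 0 := (hUmem _ hmem.2).2
    rw [hhdef, _root_.div_eq_zero_iff] at hh0
    simp only [Set.mem_setOf_eq, Polynomial.IsRoot]
    tauto
  exact hB1 (by rw [Polynomial.eq_zero_of_infinite_isRoot Bp hroots]; simp)

lemma contraction {σ : Type*} [Fintype σ] (p00 p10 p01 p11 : MvPolynomial σ ℂ)
    (hstab : ∀ (x : σ → ℂ) (s t : ℂ), (∀ i, 0 < (x i).im) → 0 < s.im → 0 < t.im →
      MvPolynomial.eval x p00 + s * MvPolynomial.eval x p10 + t * MvPolynomial.eval x p01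
        + s * t * MvPolynomial.eval x p11 ≠ 0) :
    (∀ x : σ → ℂ, (∀ i, 0 < (x i).im) →
        MvPolynomial.eval x p10 + MvPolynomial.eval x p01 = 0) ∨
    (∀ x : σ → ℂ, (∀ i, 0 < (x i).im) →
        MvPolynomial.eval x p10 + MvPolynomial.eval x p01 ≠ 0) := by
  by_cases hz : ∀ x : σ → ℂ, (∀ i, 0 < (x i).im) →
      MvPolynomial.eval x p10 + MvPolynomial.eval x p01 = 0
  · exact Or.inl hz
  right
  push_neg at hz
  obtain ⟨x₁, hx₁, hb1⟩ := hz
  intro x₀ hx₀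
  intro hb0'
  set b : MvPolynomial σ ℂ := p10 + p01 with hbdef
  have hbeval : ∀ x : σ → ℂ, MvPolynomial.eval x b
      = MvPolynomial.eval x p10 + MvPolynomial.eval x p01 := by
    intro x; rw [hbdef, map_add]
  have hb0 : MvPolynomial.eval x₀ b = 0 := by rw [hbeval]; exact hb0'
  have hb1' : MvPolynomial.eval x₁ b ≠ 0 := by rw [hbeval]; exact hb1
  have hquad : ∀ x : σ → ℂ, (∀ i, 0 < (x i).im) → ∀ s : ℂ, 0 < s.im →
      MvPolynomial.eval x p00 + (MvPolynomial.eval x b) * s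
        + (MvPolynomial.eval x p11) * s ^ 2 ≠ 0 := by
    intro x hx s hs
    have h1 := hstab x s s hx hs hs
    have h2 : MvPolynomial.eval x p00 + (MvPolynomial.eval x b) * s
        + (MvPolynomial.eval x p11) * s ^ 2
        = MvPolynomial.eval x p00 + s * MvPolynomial.eval x p10
          + s * MvPolynomial.eval x p01 + s * s * MvPolynomial.eval x p11 := by
      rw [hbeval]; ring
    rw [h2]; exact h1
  have hac : MvPolynomial.eval x₀ p00 ≠ 0 ∨ MvPolynomial.eval x₀ p11 ≠ 0 := by
    by_contra hcon
    push_neg at hcon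
    have h1 := hstab x₀ Complex.I Complex.I hx₀ (by simp) (by simp)
    apply h1
    linear_combination hcon.1 + Complex.I * hb0' + Complex.I * Complex.I * hcon.2
  rcases hac with hA | hC
  · -- use b / p00 after reversal
    apply line_vanish b p00 x₀ x₁ hx₀ hb0 hA hb1'
    intro x hx hdx
    have hrev := quad_reverse (MvPolynomial.eval x p00) (MvPolynomial.eval x b)
      (MvPolynomial.eval x p11) (hquad x hx)
    have hq := quad_im_div_nonneg (MvPolynomial.eval x p11) (-(MvPolynomial.eval x b))
      (MvPolynomial.eval x p00) hdx (fun s hs => by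
        have := hrev s hs
        have heq : MvPolynomial.eval x p11 + -MvPolynomial.eval x b * s
            + MvPolynomial.eval x p00 * s ^ 2
            = MvPolynomial.eval x p11 - MvPolynomial.eval x b * s
              + MvPolynomial.eval x p00 * s ^ 2 := by ring
        rw [heq]; exact this)
    have h3 : (-MvPolynomial.eval x b / MvPolynomial.eval x p00).im
        = -((MvPolynomial.eval x b / MvPolynomial.eval x p00).im) := by
      rw [neg_div, Complex.neg_im]
    rw [h3] at hq
    linarith
  · -- use (-b) / p11 directly
    apply line_vanish (-b) p11 x₀ x₁ hx₀ (by rw [map_neg, hb0, neg_zero]) hC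
      (by rw [map_neg]; exact neg_ne_zero.2 hb1')
    intro x hx hdx
    have hq := quad_im_div_nonneg (MvPolynomial.eval x p00) (MvPolynomial.eval x b)
      (MvPolynomial.eval x p11) hdx (hquad x hx)
    rw [map_neg, neg_div, Complex.neg_im]
    linarith

lemma uhp_zero_imp_zero {σ : Type*} [Fintype σ] (p : MvPolynomial σ ℂ)
    (h : ∀ x : σ → ℂ, (∀ i, 0 < (x i).im) → MvPolynomial.eval x p = 0) : p = 0 := by
  apply MvPolynomial.funext (q := 0)
  intro w
  rw [map_zero]
  set a : σ → ℂ := fun _ => Complex.I with ha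
  have hev := eval_aeval_line a w p
  set P : Polynomial ℂ := MvPolynomial.aeval
    (fun i => Polynomial.C (a i) + Polynomial.X * Polynomial.C (w i - a i)) p with hP
  set M : ℕ := Finset.univ.sup (fun i => ⌈|((w i - Complex.I).im)|⌉₊) with hMdef
  have hM : ∀ i, |((w i - Complex.I).im)| ≤ (M : ℝ) := by
    intro i
    refine le_trans (Nat.le_ceil _) ?_
    exact_mod_cast Finset.le_sup (f := fun i => ⌈|((w i - Complex.I).im)|⌉₊) (Finset.mem_univ i)
  have hPzero : P = 0 := by
    apply Polynomial.eq_zero_of_infinite_isRoot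
    have hinf : (Complex.ofReal '' Set.Ioo 0 (1/((M:ℝ)+1))).Infinite :=
      Set.Infinite.image (Complex.ofReal_injective.injOn)
        (Set.Ioo_infinite (by positivity))
    apply hinf.mono
    rintro x ⟨r, hr, rfl⟩
    have hroot : MvPolynomial.eval (fun i => a i + (r:ℂ) * (w i - a i)) p = 0 := by
      apply h
      intro i
      have h1 : (a i + (r:ℂ) * (w i - a i)).im = 1 + r * ((w i - Complex.I).im) := by
        simp [ha, Complex.add_im, Complex.mul_im, Complex.ofReal_re, Complex.ofReal_im]
      rw [h1]
      have h2 : |r * ((w i - Complex.I).im)| ≤ r * (M : ℝ) := by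
        rw [abs_mul, abs_of_pos hr.1]
        exact mul_le_mul_of_nonneg_left (hM i) hr.1.le
      have h3 : r * ((M:ℝ)+1) < 1 := by
        calc r * ((M:ℝ)+1) < (1/((M:ℝ)+1)) * ((M:ℝ)+1) :=
              mul_lt_mul_of_pos_right hr.2 (by positivity)
          _ = 1 := by field_simp
      have h4 : r * (M:ℝ) < 1 := by nlinarith [hr.1]
      have h5 := neg_abs_le (r * ((w i - Complex.I).im))
      linarith
    simp only [Set.mem_setOf_eq, Polynomial.IsRoot]
    rw [hev r]
    exact hroot
  have := hev 1
  rw [hPzero] at this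
  simp only [Polynomial.eval_zero] at this
  have hline : (fun i => a i + (1:ℂ) * (w i - a i)) = w := by funext i; simp [ha]
  rw [hline] at this
  exact this.symm

end BBAnalytic

section Combinatorics

open MvPolynomial

variable {n : ℕ}

/-- The exponent vector of a squarefree monomial. -/
noncomputable def mexp (R : Finset (Fin n)) : Fin n →₀ ℕ := ∑ i ∈ R, Finsupp.single i 1

lemma mexp_apply (R : Finset (Fin n)) (i : Fin n) : mexp R i = if i ∈ R then 1 else 0 := by
  classical
  rw [mexp, Finset.sum_apply']
  simp [Finsupp.single_apply, Finset.sum_ite_eq' R i]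

lemma mexp_support (R : Finset (Fin n)) : (mexp R).support = R := by
  ext i
  by_cases h : i ∈ R <;> simp [Finsupp.mem_support_iff, mexp_apply, h]

lemma mexp_inj : Function.Injective (mexp (n := n)) := fun R R' h => by
  rw [← mexp_support R, ← mexp_support R', h]

lemma prod_X_mexp (R : Finset (Fin n)) :
    (∏ i ∈ R, X i : MvPolynomial (Fin n) ℂ) = monomial (mexp R) 1 := by
  rw [← prod_X_pow_eq_monomial, mexp_support]
  apply Finset.prod_congr rfl
  intro i hi
  rw [mexp_apply, if_pos hi, pow_one]

lemma multiaffine_expand (f : MvPolynomial (Fin n) ℂ) (hdeg : ∀ i, f.degreeOf i ≤ 1) :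
    f = ∑ R : Finset (Fin n), MvPolynomial.C (f.coeff (mexp R)) * ∏ i ∈ R, MvPolynomial.X i := by
  classical
  have h1 : ∀ R : Finset (Fin n), MvPolynomial.C (f.coeff (mexp R)) * ∏ i ∈ R, X i
      = monomial (mexp R) (f.coeff (mexp R)) := by
    intro R; rw [prod_X_mexp, MvPolynomial.C_mul_monomial, mul_one]
  rw [Finset.sum_congr rfl (fun R _ => h1 R)]
  have h2 : ∑ m ∈ Finset.univ.image mexp, (MvPolynomial.monomial m) (MvPolynomial.coeff m f)
      = ∑ R : Finset (Fin n), (MvPolynomial.monomial (mexp R)) (MvPolynomial.coeff (mexp R) f) :=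
    Finset.sum_image (fun x _ y _ h => mexp_inj h)
  rw [← h2]
  conv_lhs => rw [← support_sum_monomial_coeff f]
  apply Finset.sum_subset
  · intro m hm
    simp only [Finset.mem_image]
    refine ⟨m.support, Finset.mem_univ _, ?_⟩
    ext i
    rw [mexp_apply]
    have hle : m i ≤ 1 := by
      have h := hdeg i
      rw [degreeOf_eq_sup] at h
      exact le_trans (Finset.le_sup (f := fun m => m i) hm) h
    rcases Nat.le_one_iff_eq_zero_or_eq_one.1 hle with h0 | h1'
    · rw [if_neg, h0]
      simp [Finsupp.mem_support_iff, h0]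
    · rw [if_pos, h1']
      simp [Finsupp.mem_support_iff, h1']
  · intro m _ hm
    rw [MvPolynomial.notMem_support_iff.1 hm]
    simp

/-- condition: `S` and `R` agree below `k` -/
def condk (k : ℕ) (S R : Finset (Fin n)) : Prop := ∀ i : Fin n, (i : ℕ) < k → (i ∈ S ↔ i ∈ R)

open scoped Classical in
/-- one term of the contracted symbol -/
noncomputable def trm (A : Finset (Fin n) → MvPolynomial (Fin n) ℂ)
    (c : Finset (Fin n) → ℂ) (k : ℕ) (S R : Finset (Fin n)) :
    MvPolynomial (Fin n ⊕ (Fin n ⊕ Fin n)) ℂ :=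
  (rename Sum.inl (A S)) * MvPolynomial.C (c R)
    * (∏ i ∈ Sᶜ.filter (fun i => k ≤ i.val), X (Sum.inr (Sum.inl i)))
    * (∏ i ∈ R.filter (fun i => k ≤ i.val), X (Sum.inr (Sum.inr i)))

noncomputable def etrm (x : (Fin n ⊕ (Fin n ⊕ Fin n)) → ℂ)
    (A : Finset (Fin n) → MvPolynomial (Fin n) ℂ)
    (c : Finset (Fin n) → ℂ) (k : ℕ) (S R : Finset (Fin n)) : ℂ :=
  (MvPolynomial.eval (x ∘ Sum.inl) (A S)) * (c R)
    * (∏ i ∈ Sᶜ.filter (fun i => k ≤ i.val), x (Sum.inr (Sum.inl i)))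
    * (∏ i ∈ R.filter (fun i => k ≤ i.val), x (Sum.inr (Sum.inr i)))

open scoped Classical in
noncomputable def Hk (A : Finset (Fin n) → MvPolynomial (Fin n) ℂ)
    (c : Finset (Fin n) → ℂ) (k : ℕ) : MvPolynomial (Fin n ⊕ (Fin n ⊕ Fin n)) ℂ :=
  ∑ S : Finset (Fin n), ∑ R : Finset (Fin n), if condk k S R then trm A c k S R else 0

open scoped Classical in
noncomputable def Pc (A : Finset (Fin n) → MvPolynomial (Fin n) ℂ)
    (c : Finset (Fin n) → ℂ) (k : ℕ) (P : Finset (Fin n) → Finset (Fin n) → Prop) :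
    MvPolynomial (Fin n ⊕ (Fin n ⊕ Fin n)) ℂ :=
  ∑ S : Finset (Fin n), ∑ R : Finset (Fin n),
    if condk k S R ∧ P S R then trm A c (k+1) S R else 0

lemma eval_trm (x : (Fin n ⊕ (Fin n ⊕ Fin n)) → ℂ) (A) (c) (k : ℕ) (S R : Finset (Fin n)) :
    MvPolynomial.eval x (trm A c k S R) = etrm x A c k S R := by
  simp [trm, etrm, MvPolynomial.eval_rename]

open scoped Classical in
lemma eval_Hk (x : (Fin n ⊕ (Fin n ⊕ Fin n)) → ℂ) (A) (c) (k : ℕ) :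
    MvPolynomial.eval x (Hk A c k)
      = ∑ S : Finset (Fin n), ∑ R : Finset (Fin n),
          if condk k S R then etrm x A c k S R else 0 := by
  rw [Hk, map_sum]
  refine Finset.sum_congr rfl fun S _ => ?_
  rw [map_sum]
  refine Finset.sum_congr rfl fun R _ => ?_
  rw [apply_ite (MvPolynomial.eval x), eval_trm, map_zero]

open scoped Classical in
lemma eval_Pc (x : (Fin n ⊕ (Fin n ⊕ Fin n)) → ℂ) (A) (c) (k : ℕ) (P) :
    MvPolynomial.eval x (Pc A c k P)
      = ∑ S : Finset (Fin n), ∑ R : Finset (Fin n),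
          if condk k S R ∧ P S R then etrm x A c (k+1) S R else 0 := by
  rw [Pc, map_sum]
  refine Finset.sum_congr rfl fun S _ => ?_
  rw [map_sum]
  refine Finset.sum_congr rfl fun R _ => ?_
  rw [apply_ite (MvPolynomial.eval x), eval_trm, map_zero]

end Combinatorics

section Combinatorics2

open MvPolynomial

variable {n : ℕ}

lemma filter_succ_of_not_mem (F : Finset (Fin n)) (k : ℕ) (κ : Fin n) (hκ : κ.val = k)
    (h : κ ∉ F) : F.filter (fun i => k ≤ i.val) = F.filter (fun i => k + 1 ≤ i.val) := by
  ext i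
  simp only [Finset.mem_filter]
  constructor
  · rintro ⟨hi, hik⟩
    refine ⟨hi, ?_⟩
    rcases lt_or_eq_of_le hik with hlt | heq
    · exact hlt
    · exfalso
      have : i = κ := Fin.ext (by rw [hκ, heq])
      exact h (this ▸ hi)
  · rintro ⟨hi, hik⟩
    exact ⟨hi, le_trans (Nat.le_succ k) hik⟩

lemma prod_filter_succ_of_mem (F : Finset (Fin n)) (k : ℕ) (κ : Fin n) (hκ : κ.val = k)
    (h : κ ∈ F) (g : Fin n → ℂ) :
    ∏ i ∈ F.filter (fun i => k ≤ i.val), g i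
      = g κ * ∏ i ∈ F.filter (fun i => k + 1 ≤ i.val), g i := by
  classical
  have hins : F.filter (fun i => k ≤ i.val) = insert κ (F.filter (fun i => k + 1 ≤ i.val)) := by
    ext i
    simp only [Finset.mem_filter, Finset.mem_insert]
    constructor
    · rintro ⟨hi, hik⟩
      rcases lt_or_eq_of_le hik with hlt | heq
      · exact Or.inr ⟨hi, hlt⟩
      · exact Or.inl (Fin.ext (by rw [hκ, heq]))
    · rintro (rfl | ⟨hi, hik⟩)
      · exact ⟨h, le_of_eq hκ.symm⟩
      · exact ⟨hi, le_trans (Nat.le_succ k) hik⟩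
  rw [hins, Finset.prod_insert (by simp [Finset.mem_filter, hκ])]

lemma comp_update_update_inl (x : (Fin n ⊕ (Fin n ⊕ Fin n)) → ℂ) (κ : Fin n) (s t : ℂ) :
    (Function.update (Function.update x (Sum.inr (Sum.inl κ)) s) (Sum.inr (Sum.inr κ)) t)
        ∘ Sum.inl = x ∘ Sum.inl := by
  funext j
  simp only [Function.comp_apply]
  rw [Function.update_of_ne (by simp), Function.update_of_ne (by simp)]

open scoped Classical in
lemma eval_Pc_update (A : Finset (Fin n) → MvPolynomial (Fin n) ℂ) (c : Finset (Fin n) → ℂ)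
    (k : ℕ) (κ : Fin n) (hκ : κ.val = k) (P : Finset (Fin n) → Finset (Fin n) → Prop)
    (x : (Fin n ⊕ (Fin n ⊕ Fin n)) → ℂ) (s t : ℂ) :
    MvPolynomial.eval
      (Function.update (Function.update x (Sum.inr (Sum.inl κ)) s) (Sum.inr (Sum.inr κ)) t)
      (Pc A c k P) = MvPolynomial.eval x (Pc A c k P) := by
  set x' := Function.update (Function.update x (Sum.inr (Sum.inl κ)) s) (Sum.inr (Sum.inr κ)) t
    with hx'
  rw [eval_Pc, eval_Pc]
  refine Finset.sum_congr rfl fun S _ => Finset.sum_congr rfl fun R _ => ?_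
  by_cases h : condk k S R ∧ P S R
  · rw [if_pos h, if_pos h]
    unfold etrm
    rw [comp_update_update_inl]
    congr 1
    · congr 1
      apply Finset.prod_congr rfl
      intro i hi
      have hik : k + 1 ≤ i.val := (Finset.mem_filter.1 hi).2
      have hiκ : i ≠ κ := by
        intro he
        rw [he, hκ] at hik
        omega
      rw [hx']
      rw [Function.update_of_ne (by simp), Function.update_of_ne (by simp [hiκ])]
    · apply Finset.prod_congr rfl
      intro i hi
      have hik : k + 1 ≤ i.val := (Finset.mem_filter.1 hi).2
      have hiκ : i ≠ κ := by
        intro he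
        rw [he, hκ] at hik
        omega
      rw [hx']
      rw [Function.update_of_ne (by simp [hiκ])]
      rw [Function.update_of_ne (by simp)]
  · rw [if_neg h, if_neg h]

open scoped Classical in
lemma eval_Hk_split (A : Finset (Fin n) → MvPolynomial (Fin n) ℂ) (c : Finset (Fin n) → ℂ)
    (k : ℕ) (κ : Fin n) (hκ : κ.val = k) (x : (Fin n ⊕ (Fin n ⊕ Fin n)) → ℂ) :
    MvPolynomial.eval x (Hk A c k)
      = MvPolynomial.eval x (Pc A c k (fun S R => κ ∈ S ∧ κ ∉ R))
        + x (Sum.inr (Sum.inl κ)) * MvPolynomial.eval x (Pc A c k (fun S R => κ ∉ S ∧ κ ∉ R))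
        + x (Sum.inr (Sum.inr κ)) * MvPolynomial.eval x (Pc A c k (fun S R => κ ∈ S ∧ κ ∈ R))
        + x (Sum.inr (Sum.inl κ)) * x (Sum.inr (Sum.inr κ))
            * MvPolynomial.eval x (Pc A c k (fun S R => κ ∉ S ∧ κ ∈ R)) := by
  rw [eval_Hk, eval_Pc, eval_Pc, eval_Pc, eval_Pc]
  simp only [Finset.mul_sum, ← Finset.sum_add_distrib]
  refine Finset.sum_congr rfl fun S _ => Finset.sum_congr rfl fun R _ => ?_
  by_cases hc : condk k S R
  · by_cases hS : κ ∈ S <;> by_cases hR : κ ∈ R <;>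
      simp only [hc, hS, hR, if_pos, if_neg, true_and, and_true, and_false, false_and,
        not_true, not_false_iff, if_true, if_false, mul_zero, add_zero, zero_add] <;>
      unfold etrm
    -- case κ ∈ S, κ ∈ R : u-factor
    · rw [filter_succ_of_not_mem Sᶜ k κ hκ (by simp [hS]),
        prod_filter_succ_of_mem R k κ hκ hR]
      try ring
    -- case κ ∈ S, κ ∉ R
    · rw [filter_succ_of_not_mem Sᶜ k κ hκ (by simp [hS]),
        filter_succ_of_not_mem R k κ hκ hR]
      try ring
    -- case κ ∉ S, κ ∈ R
    · rw [prod_filter_succ_of_mem Sᶜ k κ hκ (by simp [hS]),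
        prod_filter_succ_of_mem R k κ hκ hR]
      try ring
    -- case κ ∉ S, κ ∉ R
    · rw [prod_filter_succ_of_mem Sᶜ k κ hκ (by simp [hS]),
        filter_succ_of_not_mem R k κ hκ hR]
      try ring
  · simp [hc]

lemma condk_succ (k : ℕ) (κ : Fin n) (hκ : κ.val = k) (S R : Finset (Fin n)) :
    condk (k+1) S R ↔ condk k S R ∧ (κ ∈ S ↔ κ ∈ R) := by
  constructor
  · intro h
    exact ⟨fun i hi => h i (Nat.lt_succ_of_lt hi), h κ (by rw [hκ]; exact Nat.lt_succ_self k)⟩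
  · rintro ⟨h1, h2⟩ i hi
    rcases Nat.lt_succ_iff_lt_or_eq.1 hi with h | h
    · exact h1 i h
    · have : i = κ := Fin.ext (by rw [h, hκ])
      rw [this]
      exact h2

open scoped Classical in
lemma eval_Hk_succ (A : Finset (Fin n) → MvPolynomial (Fin n) ℂ) (c : Finset (Fin n) → ℂ)
    (k : ℕ) (κ : Fin n) (hκ : κ.val = k) (x : (Fin n ⊕ (Fin n ⊕ Fin n)) → ℂ) :
    MvPolynomial.eval x (Hk A c (k+1))
      = MvPolynomial.eval x (Pc A c k (fun S R => κ ∉ S ∧ κ ∉ R))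
        + MvPolynomial.eval x (Pc A c k (fun S R => κ ∈ S ∧ κ ∈ R)) := by
  rw [eval_Hk, eval_Pc, eval_Pc]
  simp only [← Finset.sum_add_distrib]
  refine Finset.sum_congr rfl fun S _ => Finset.sum_congr rfl fun R _ => ?_
  rw [condk_succ k κ hκ]
  by_cases hc : condk k S R
  · by_cases hS : κ ∈ S <;> by_cases hR : κ ∈ R <;>
      simp [hc, hS, hR]
  · simp [hc]

open scoped Classical in
lemma eval_Hk_zero (A : Finset (Fin n) → MvPolynomial (Fin n) ℂ) (c : Finset (Fin n) → ℂ)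
    (x : (Fin n ⊕ (Fin n ⊕ Fin n)) → ℂ) :
    MvPolynomial.eval x (Hk A c 0)
      = (∑ S : Finset (Fin n),
            MvPolynomial.eval (x ∘ Sum.inl) (A S) * ∏ i ∈ Sᶜ, x (Sum.inr (Sum.inl i)))
        * (∑ R : Finset (Fin n), c R * ∏ i ∈ R, x (Sum.inr (Sum.inr i))) := by
  rw [eval_Hk, Finset.sum_mul_sum]
  refine Finset.sum_congr rfl fun S _ => Finset.sum_congr rfl fun R _ => ?_
  have hcz : condk 0 S R := fun i hi => absurd hi (Nat.not_lt_zero _)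
  rw [if_pos hcz]
  unfold etrm
  rw [Finset.filter_true_of_mem (fun i _ => Nat.zero_le _),
    Finset.filter_true_of_mem (fun i _ => Nat.zero_le _)]
  ring

open scoped Classical in
lemma eval_Hk_top (A : Finset (Fin n) → MvPolynomial (Fin n) ℂ) (c : Finset (Fin n) → ℂ)
    (x : (Fin n ⊕ (Fin n ⊕ Fin n)) → ℂ) :
    MvPolynomial.eval x (Hk A c n)
      = ∑ S : Finset (Fin n), MvPolynomial.eval (x ∘ Sum.inl) (A S) * c S := by
  rw [eval_Hk]
  refine Finset.sum_congr rfl fun S _ => ?_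
  have hcond : ∀ R : Finset (Fin n), condk n S R ↔ S = R := by
    intro R
    constructor
    · intro h
      exact Finset.ext fun i => h i i.isLt
    · rintro rfl
      exact fun i _ => Iff.rfl
  calc (∑ R : Finset (Fin n), if condk n S R then etrm x A c n S R else 0)
      = ∑ R : Finset (Fin n), if S = R then etrm x A c n S R else 0 := by
        refine Finset.sum_congr rfl fun R _ => ?_
        by_cases h : condk n S R
        · rw [if_pos h, if_pos ((hcond R).1 h)]
        · rw [if_neg h, if_neg (fun he => h ((hcond R).2 he))]
    _ = etrm x A c n S S := by rw [Finset.sum_ite_eq Finset.univ S]; simp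
    _ = MvPolynomial.eval (x ∘ Sum.inl) (A S) * c S := by
        unfold etrm
        rw [Finset.filter_false_of_mem (fun i _ => by simp [Nat.not_le, i.isLt]),
          Finset.filter_false_of_mem (fun i _ => by simp [Nat.not_le, i.isLt])]
        simp

end Combinatorics2

end BBAux

/-- If the symbol `G_T(z,w) = T[∏ᵢ(zᵢ+wᵢ)] = ∑_{S ⊆ [n]} T(z^S)·w^{[n]∖S}` of a
linear operator `T` on multi-affine polynomials is stable (as a polynomial in
`2n` variables, the `z`-variables indexed by `Sum.inl` and the `w`-variables by
`Sum.inr`), then `T` maps every stable multi-affine polynomial to a stable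
polynomial or to zero. -/
theorem multiaffine_symbol_stable_imp_preserver (n : ℕ)
    (T : MvPolynomial (Fin n) ℂ →ₗ[ℂ] MvPolynomial (Fin n) ℂ)
    (hsymb : IsStable (∑ S : Finset (Fin n),
      rename Sum.inl (T (∏ i ∈ S, X i)) * ∏ i ∈ Sᶜ, X (Sum.inr i))) :
    ∀ f : MvPolynomial (Fin n) ℂ, (∀ i, f.degreeOf i ≤ 1) → IsStable f →
      T f = 0 ∨ IsStable (T f) := by
  intro f hdeg hf
  classical
  set A : Finset (Fin n) → MvPolynomial (Fin n) ℂ := fun S => T (∏ i ∈ S, X i) with hA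
  set c : Finset (Fin n) → ℂ := fun R => f.coeff (mexp R) with hc
  have hsymb_eval : ∀ y : (Fin n ⊕ Fin n) → ℂ,
      MvPolynomial.eval y (∑ S : Finset (Fin n),
          rename Sum.inl (T (∏ i ∈ S, X i)) * ∏ i ∈ Sᶜ, X (Sum.inr i))
        = ∑ S : Finset (Fin n),
            MvPolynomial.eval (y ∘ Sum.inl) (A S) * ∏ i ∈ Sᶜ, y (Sum.inr i) := by
    intro y
    rw [map_sum]
    refine Finset.sum_congr rfl fun S _ => ?_
    rw [map_mul, MvPolynomial.eval_rename]
    congr 1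
    rw [map_prod]
    exact Finset.prod_congr rfl fun i _ => MvPolynomial.eval_X _
  have hf_eval : ∀ u : Fin n → ℂ,
      MvPolynomial.eval u f = ∑ R : Finset (Fin n), c R * ∏ i ∈ R, u i := by
    intro u
    conv_lhs => rw [multiaffine_expand f hdeg]
    rw [map_sum]
    refine Finset.sum_congr rfl fun R _ => ?_
    rw [map_mul, map_prod]
    simp [hc]
  have hTf : T f = ∑ R : Finset (Fin n), c R • A R := by
    conv_lhs => rw [multiaffine_expand f hdeg]
    rw [map_sum]
    refine Finset.sum_congr rfl fun R _ => ?_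
    calc T (MvPolynomial.C (f.coeff (mexp R)) * ∏ i ∈ R, X i)
        = T (f.coeff (mexp R) • ∏ i ∈ R, X i) := by rw [MvPolynomial.smul_eq_C_mul]
      _ = f.coeff (mexp R) • T (∏ i ∈ R, X i) := T.map_smul _ _
      _ = c R • A R := by simp [hA, hc]
  have hTf_eval : ∀ z : Fin n → ℂ,
      MvPolynomial.eval z (T f)
        = ∑ S : Finset (Fin n), MvPolynomial.eval z (A S) * c S := by
    intro z
    rw [hTf, map_sum]
    refine Finset.sum_congr rfl fun S _ => ?_
    rw [MvPolynomial.smul_eq_C_mul, map_mul, MvPolynomial.eval_C]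
    ring
  -- the main induction on the number of contracted variables
  have main : ∀ k : ℕ, k ≤ n →
      (∀ x : Fin n ⊕ (Fin n ⊕ Fin n) → ℂ, (∀ v, 0 < (x v).im) →
        MvPolynomial.eval x (Hk A c k) = 0) ∨
      (∀ x : Fin n ⊕ (Fin n ⊕ Fin n) → ℂ, (∀ v, 0 < (x v).im) →
        MvPolynomial.eval x (Hk A c k) ≠ 0) := by
    intro k
    induction k with
    | zero =>
      intro _
      right
      intro x hx
      rw [eval_Hk_zero]
      apply mul_ne_zero
      · have hy : ∀ v : Fin n ⊕ Fin n,
            0 < ((Sum.elim (x ∘ Sum.inl) (x ∘ Sum.inr ∘ Sum.inl) : (Fin n ⊕ Fin n) → ℂ) v).im := by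
          intro v; cases v <;> exact hx _
        have hval := hsymb _ hy
        rw [hsymb_eval] at hval
        exact hval
      · have hval := hf (x ∘ Sum.inr ∘ Sum.inr) (fun i => hx _)
        rw [hf_eval] at hval
        exact hval
    | succ k ih =>
      intro hk1
      have hk : k < n := hk1
      have hκ : (⟨k, hk⟩ : Fin n).val = k := rfl
      -- common fact: updated points stay in the upper half-space
      have hupd : ∀ (x : Fin n ⊕ (Fin n ⊕ Fin n) → ℂ) (s t : ℂ), (∀ v, 0 < (x v).im) →
          0 < s.im → 0 < t.im → ∀ v, 0 < ((Function.update (Function.update x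
            (Sum.inr (Sum.inl (⟨k, hk⟩ : Fin n))) s) (Sum.inr (Sum.inr (⟨k, hk⟩ : Fin n))) t)
              v).im := by
        intro x s t hx hs' ht' v
        by_cases h1 : v = Sum.inr (Sum.inr (⟨k, hk⟩ : Fin n))
        · rw [h1, Function.update_self]; exact ht'
        · rw [Function.update_of_ne h1]
          by_cases h2 : v = Sum.inr (Sum.inl (⟨k, hk⟩ : Fin n))
          · rw [h2, Function.update_self]; exact hs'
          · rw [Function.update_of_ne h2]; exact hx v
      have hwval : ∀ (x : Fin n ⊕ (Fin n ⊕ Fin n) → ℂ) (s t : ℂ),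
          (Function.update (Function.update x (Sum.inr (Sum.inl (⟨k, hk⟩ : Fin n))) s)
            (Sum.inr (Sum.inr (⟨k, hk⟩ : Fin n))) t) (Sum.inr (Sum.inl (⟨k, hk⟩ : Fin n)))
          = s := by
        intro x s t
        rw [Function.update_of_ne (by simp), Function.update_self]
      have huval : ∀ (x : Fin n ⊕ (Fin n ⊕ Fin n) → ℂ) (s t : ℂ),
          (Function.update (Function.update x (Sum.inr (Sum.inl (⟨k, hk⟩ : Fin n))) s)
            (Sum.inr (Sum.inr (⟨k, hk⟩ : Fin n))) t) (Sum.inr (Sum.inr (⟨k, hk⟩ : Fin n)))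
          = t := by
        intro x s t
        rw [Function.update_self]
      rcases ih (Nat.le_of_succ_le hk1) with hz | hs
      · -- the previous stage vanishes identically: so does the next one
        left
        intro x hx
        have key : ∀ s t : ℂ, 0 < s.im → 0 < t.im →
            MvPolynomial.eval x (Pc A c k (fun S R => (⟨k, hk⟩ : Fin n) ∈ S ∧ (⟨k, hk⟩ : Fin n) ∉ R))
            + s * MvPolynomial.eval x (Pc A c k (fun S R => (⟨k, hk⟩ : Fin n) ∉ S ∧ (⟨k, hk⟩ : Fin n) ∉ R))
            + t * MvPolynomial.eval x (Pc A c k (fun S R => (⟨k, hk⟩ : Fin n) ∈ S ∧ (⟨k, hk⟩ : Fin n) ∈ R))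
            + s * t * MvPolynomial.eval x (Pc A c k (fun S R => (⟨k, hk⟩ : Fin n) ∉ S ∧ (⟨k, hk⟩ : Fin n) ∈ R))
            = 0 := by
          intro s t hs' ht'
          have h0 := hz _ (hupd x s t hx hs' ht')
          rw [eval_Hk_split A c k ⟨k, hk⟩ hκ] at h0
          rw [eval_Pc_update A c k ⟨k, hk⟩ hκ _ x s t, eval_Pc_update A c k ⟨k, hk⟩ hκ _ x s t,
            eval_Pc_update A c k ⟨k, hk⟩ hκ _ x s t, eval_Pc_update A c k ⟨k, hk⟩ hκ _ x s t,
            hwval x s t, huval x s t] at h0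
          exact h0
        have him : (0:ℝ) < Complex.I.im := by simp
        have him2 : (0:ℝ) < (2*Complex.I).im := by simp
        have q1 := key Complex.I Complex.I him him
        have q2 := key Complex.I (2*Complex.I) him him2
        have q3 := key (2*Complex.I) Complex.I him2 him
        have q4 := key (2*Complex.I) (2*Complex.I) him2 him2
        have hBC : Complex.I *
            (MvPolynomial.eval x (Pc A c k (fun S R => (⟨k, hk⟩ : Fin n) ∉ S ∧ (⟨k, hk⟩ : Fin n) ∉ R))
            + MvPolynomial.eval x (Pc A c k (fun S R => (⟨k, hk⟩ : Fin n) ∈ S ∧ (⟨k, hk⟩ : Fin n) ∈ R))) = 0 := by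
          linear_combination (-4 : ℂ)*q1 + 3*q2 + 3*q3 - 2*q4
        have hBC0 := (mul_eq_zero.1 hBC).resolve_left Complex.I_ne_zero
        rw [eval_Hk_succ A c k ⟨k, hk⟩ hκ x]
        exact hBC0
      · -- the previous stage is nonvanishing: apply the contraction lemma
        have hcontr := contraction
          (Pc A c k (fun S R => (⟨k, hk⟩ : Fin n) ∈ S ∧ (⟨k, hk⟩ : Fin n) ∉ R))
          (Pc A c k (fun S R => (⟨k, hk⟩ : Fin n) ∉ S ∧ (⟨k, hk⟩ : Fin n) ∉ R))
          (Pc A c k (fun S R => (⟨k, hk⟩ : Fin n) ∈ S ∧ (⟨k, hk⟩ : Fin n) ∈ R))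
          (Pc A c k (fun S R => (⟨k, hk⟩ : Fin n) ∉ S ∧ (⟨k, hk⟩ : Fin n) ∈ R))
          (by
            intro x s t hx hs' ht'
            have h0 := hs _ (hupd x s t hx hs' ht')
            rw [eval_Hk_split A c k ⟨k, hk⟩ hκ] at h0
            rw [eval_Pc_update A c k ⟨k, hk⟩ hκ _ x s t, eval_Pc_update A c k ⟨k, hk⟩ hκ _ x s t,
              eval_Pc_update A c k ⟨k, hk⟩ hκ _ x s t, eval_Pc_update A c k ⟨k, hk⟩ hκ _ x s t,
              hwval x s t, huval x s t] at h0
            exact h0)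
        rcases hcontr with h0 | h1
        · left
          intro x hx
          rw [eval_Hk_succ A c k ⟨k, hk⟩ hκ x]
          exact h0 x hx
        · right
          intro x hx
          rw [eval_Hk_succ A c k ⟨k, hk⟩ hκ x]
          exact h1 x hx
  rcases main n le_rfl with hz | hs
  · left
    apply uhp_zero_imp_zero
    intro z hz'
    rw [hTf_eval]
    have hx : ∀ v : Fin n ⊕ (Fin n ⊕ Fin n),
        0 < ((Sum.elim z (Sum.elim z z) : (Fin n ⊕ (Fin n ⊕ Fin n)) → ℂ) v).im := by
      intro v; rcases v with j | j | j <;> exact hz' _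
    have hval := hz _ hx
    rw [eval_Hk_top] at hval
    exact hval
  · right
    intro z hz'
    rw [hTf_eval]
    have hx : ∀ v : Fin n ⊕ (Fin n ⊕ Fin n),
        0 < ((Sum.elim z (Sum.elim z z) : (Fin n ⊕ (Fin n ⊕ Fin n)) → ℂ) v).im := by
      intro v; rcases v with j | j | j <;> exact hz' _
    have hval := hs _ hx
    rw [eval_Hk_top] at hval
    exact hval
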